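/- arXiv:1602.05217 — 3 statements merged into one kernel-verified Lean document; each statement's English description precedes it below -/
import Mathlib

section
/- Let d ≥ 2, m, n_1,…,n_d be positive integers, r = (r_1,…,r_d) a tuple of positive integers, and a ∈ (0,1). Let A : ℝ^{n_1×⋯×n_d} → ℝ^m be a linear map satisfying the HOSVD-TRIP at rank 3r = (3r_1,…,3r_d) with constant δ ≤ a/4, and set ε = a²/(17·(1+√(1+δ)·‖A‖_{2→2})²). Let X be a tensor of HOSVD-rank at most r and let y = A(X). Suppose (X^j)_{j≥0} is a sequence of tensors such that for every j ≥ 0 the tensor X^{j+1} has HOSVD-rank at most r and ‖Y^j − X^{j+1}‖_F ≤ (1+ε)·‖Y^j − X‖_F, where Y^j = X^j + A*(y − A(X^j)). Then X^j converges to X in Frobenius norm as j → ∞. -/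
open scoped BigOperators

noncomputable section

/-- The mode-`k` unfolding of an order-`d` tensor, with columns indexed (redundantly)
by full multi-indices: entry `(a, j)` is `X` evaluated at `j` with its `k`-th index
replaced by `a`.  Its rank coincides with the rank of the usual mode-`k` unfolding. -/
def unfold {d : ℕ} (n : Fin d → ℕ) (k : Fin d) (X : (∀ i, Fin (n i)) → ℝ) :
    Matrix (Fin (n k)) (∀ i, Fin (n i)) ℝ :=
  Matrix.of fun a j => X (Function.update j k a)

/-- `X` has HOSVD-rank at most `r`: every mode-`k` unfolding has matrix rank at most `r k`. -/
def hosvdRankLE {d : ℕ} (n r : Fin d → ℕ) (X : EuclideanSpace ℝ (∀ i, Fin (n i))) : Prop :=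
  ∀ k, (unfold n k (fun j => X j)).rank ≤ r k

/-- Rank of a sum of matrices is at most the sum of the ranks. -/
lemma matrix_rank_add_le {p q : Type*} [Fintype p] [Fintype q]
    (M N : Matrix p q ℝ) : (M + N).rank ≤ M.rank + N.rank := by
  classical
  rw [Matrix.rank, Matrix.rank, Matrix.rank, Matrix.mulVecLin_add]
  have h : LinearMap.range (M.mulVecLin + N.mulVecLin) ≤
      LinearMap.range M.mulVecLin ⊔ LinearMap.range N.mulVecLin := by
    rintro x ⟨v, rfl⟩
    exact Submodule.add_mem_sup ⟨v, rfl⟩ ⟨v, rfl⟩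
  exact (Submodule.finrank_mono h).trans
    (Submodule.finrank_add_le_finrank_add_finrank _ _)

/-- Rank of a scalar multiple is at most the rank. -/
lemma matrix_rank_smul_le {p q : Type*} [Fintype p] [Fintype q]
    (c : ℝ) (M : Matrix p q ℝ) : (c • M).rank ≤ M.rank := by
  classical
  rw [Matrix.rank, Matrix.rank]
  apply Submodule.finrank_mono
  rintro x ⟨v, rfl⟩
  refine ⟨c • v, ?_⟩
  simp [Matrix.mulVecLin_apply, Matrix.mulVec_smul, Matrix.smul_mulVec]

/-- A linear combination of three tensors of HOSVD-rank at most `r` has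
HOSVD-rank at most `3r`. -/
lemma hosvd_comb {d : ℕ} {n r : Fin d → ℕ}
    {X₁ X₂ X₃ : EuclideanSpace ℝ (∀ i, Fin (n i))}
    (h₁ : hosvdRankLE n r X₁) (h₂ : hosvdRankLE n r X₂) (h₃ : hosvdRankLE n r X₃)
    (c₁ c₂ c₃ : ℝ) :
    hosvdRankLE n (fun k => 3 * r k) (c₁ • X₁ + c₂ • X₂ + c₃ • X₃) := by
  intro k
  have hu : unfold n k (fun j => (c₁ • X₁ + c₂ • X₂ + c₃ • X₃ :
        EuclideanSpace ℝ (∀ i, Fin (n i))) j)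
      = c₁ • unfold n k (fun j => X₁ j) + c₂ • unfold n k (fun j => X₂ j)
        + c₃ • unfold n k (fun j => X₃ j) := by
    ext a j
    simp [unfold, PiLp.add_apply, PiLp.smul_apply, smul_eq_mul,
      Matrix.add_apply, Matrix.smul_apply]
  rw [hu]
  show _ ≤ 3 * r k
  have r1 := (matrix_rank_smul_le c₁ (unfold n k fun j => X₁ j)).trans (h₁ k)
  have r2 := (matrix_rank_smul_le c₂ (unfold n k fun j => X₂ j)).trans (h₂ k)
  have r3 := (matrix_rank_smul_le c₃ (unfold n k fun j => X₃ j)).trans (h₃ k)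
  have t1 := matrix_rank_add_le (c₁ • unfold n k (fun j => X₁ j) +
      c₂ • unfold n k (fun j => X₂ j)) (c₃ • unfold n k (fun j => X₃ j))
  have t2 := matrix_rank_add_le (c₁ • unfold n k (fun j => X₁ j))
      (c₂ • unfold n k (fun j => X₂ j))
  omega

/-- Polarization bound: if the quadratic form `‖w‖² − ‖Aw‖²` is `δ`-small on all
combinations `s•u + t•v`, then the associated bilinear form at `(u,v)` is bounded
by `δ‖u‖‖v‖`. -/
lemma polar_bound {E F : Type*} [NormedAddCommGroup E] [InnerProductSpace ℝ E]
    [NormedAddCommGroup F] [InnerProductSpace ℝ F]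
    (A : E →L[ℝ] F) (δ : ℝ) (u v : E)
    (h : ∀ s t : ℝ, |‖s • u + t • v‖ ^ 2 - ‖A (s • u + t • v)‖ ^ 2|
        ≤ δ * ‖s • u + t • v‖ ^ 2) :
    |inner ℝ u v - (inner ℝ (A u) (A v) : ℝ)| ≤ δ * (‖u‖ * ‖v‖) := by
  by_cases hu : u = 0
  · simp [hu]
  by_cases hv : v = 0
  · simp [hv]
  have hun : (0:ℝ) < ‖u‖ := norm_pos_iff.mpr hu
  have hvn : (0:ℝ) < ‖v‖ := norm_pos_iff.mpr hv
  set t : ℝ := Real.sqrt (‖v‖ / ‖u‖) with ht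
  have ht0 : 0 < t := Real.sqrt_pos.mpr (div_pos hvn hun)
  have ht2 : t ^ 2 = ‖v‖ / ‖u‖ := Real.sq_sqrt (le_of_lt (div_pos hvn hun))
  set x : E := t • u with hx
  set yy : E := t⁻¹ • v with hy
  have hinner : (inner ℝ x yy : ℝ) = inner ℝ u v := by
    rw [hx, hy, real_inner_smul_left, real_inner_smul_right, ← mul_assoc,
      mul_inv_cancel₀ (ne_of_gt ht0), one_mul]
  have hinnerA : (inner ℝ (A x) (A yy) : ℝ) = inner ℝ (A u) (A v) := by
    rw [hx, hy, map_smul, map_smul, real_inner_smul_left, real_inner_smul_right,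
      ← mul_assoc, mul_inv_cancel₀ (ne_of_gt ht0), one_mul]
  have q_diff : (‖x + yy‖ ^ 2 - ‖A (x + yy)‖ ^ 2) - (‖x - yy‖ ^ 2 - ‖A (x - yy)‖ ^ 2)
      = 4 * ((inner ℝ x yy : ℝ) - inner ℝ (A x) (A yy)) := by
    have h1 := norm_add_sq_real x yy
    have h2 := norm_sub_sq_real x yy
    have h3 := norm_add_sq_real (A x) (A yy)
    have h4 := norm_sub_sq_real (A x) (A yy)
    rw [map_add, map_sub]
    linarith
  have hb1 : |‖x + yy‖ ^ 2 - ‖A (x + yy)‖ ^ 2| ≤ δ * ‖x + yy‖ ^ 2 := by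
    have := h t t⁻¹
    rwa [← hx, ← hy] at this
  have hb2 : |‖x - yy‖ ^ 2 - ‖A (x - yy)‖ ^ 2| ≤ δ * ‖x - yy‖ ^ 2 := by
    have := h t (-t⁻¹)
    rw [neg_smul, ← hx, ← hy, ← sub_eq_add_neg] at this
    exact this
  have hpar : ‖x + yy‖ ^ 2 + ‖x - yy‖ ^ 2 = 2 * ‖x‖ ^ 2 + 2 * ‖yy‖ ^ 2 := by
    have h1 := norm_add_sq_real x yy
    have h2 := norm_sub_sq_real x yy
    linarith
  have hxn : ‖x‖ ^ 2 = ‖u‖ * ‖v‖ := by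
    rw [hx, norm_smul, Real.norm_eq_abs, abs_of_pos ht0, mul_pow, ht2]
    field_simp
  have hyn : ‖yy‖ ^ 2 = ‖u‖ * ‖v‖ := by
    rw [hy, norm_smul, Real.norm_eq_abs, abs_of_pos (inv_pos.mpr ht0), mul_pow,
      inv_pow, ht2]
    field_simp
  have key : |4 * ((inner ℝ u v : ℝ) - inner ℝ (A u) (A v))| ≤ δ * (4 * (‖u‖ * ‖v‖)) := by
    rw [← hinner, ← hinnerA, ← q_diff]
    calc |(‖x + yy‖ ^ 2 - ‖A (x + yy)‖ ^ 2) - (‖x - yy‖ ^ 2 - ‖A (x - yy)‖ ^ 2)|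
        ≤ |‖x + yy‖ ^ 2 - ‖A (x + yy)‖ ^ 2| + |‖x - yy‖ ^ 2 - ‖A (x - yy)‖ ^ 2| :=
          abs_sub _ _
      _ ≤ δ * ‖x + yy‖ ^ 2 + δ * ‖x - yy‖ ^ 2 := add_le_add hb1 hb2
      _ = δ * (‖x + yy‖ ^ 2 + ‖x - yy‖ ^ 2) := by ring
      _ = δ * (4 * (‖u‖ * ‖v‖)) := by rw [hpar, hxn, hyn]; ring
  rw [abs_mul, abs_of_pos (by norm_num : (0:ℝ) < 4)] at key
  linarith [abs_nonneg ((inner ℝ u v : ℝ) - inner ℝ (A u) (A v))]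

lemma quad_solve (a U V : ℝ) (ha0 : 0 < a) (hU : 0 ≤ U) (hV : 0 ≤ V)
    (h : V ^ 2 ≤ 3 / 17 * a ^ 2 * U ^ 2 + a / 2 * (U * V)) :
    V ≤ 3 / 4 * a * U := by
  nlinarith [mul_nonneg (mul_nonneg ha0.le hU) hV, sq_nonneg (V - 3 / 4 * a * U),
    mul_nonneg ha0.le hU, mul_pos ha0 ha0, sq_nonneg a, sq_nonneg U]

set_option maxHeartbeats 1000000 in
theorem classical_TIHT_convergence
    (d m : ℕ) (hd : 2 ≤ d) (hm : 0 < m) (n r : Fin d → ℕ)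
    (hn : ∀ i, 0 < n i) (hr : ∀ i, 0 < r i)
    (a : ℝ) (ha : a ∈ Set.Ioo (0 : ℝ) 1)
    (A : EuclideanSpace ℝ (∀ i, Fin (n i)) →L[ℝ] EuclideanSpace ℝ (Fin m))
    (δ : ℝ) (hδ0 : 0 ≤ δ) (hδa : δ ≤ a / 4)
    (hTRIP : ∀ Z : EuclideanSpace ℝ (∀ i, Fin (n i)),
      hosvdRankLE n (fun k => 3 * r k) Z →
        (1 - δ) * ‖Z‖ ^ 2 ≤ ‖A Z‖ ^ 2 ∧ ‖A Z‖ ^ 2 ≤ (1 + δ) * ‖Z‖ ^ 2)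
    (ε : ℝ)
    (hε : ε = a ^ 2 / (17 * (1 + Real.sqrt (1 + δ) * ‖A‖) ^ 2))
    (X : EuclideanSpace ℝ (∀ i, Fin (n i))) (hX : hosvdRankLE n r X)
    (y : EuclideanSpace ℝ (Fin m)) (hy : y = A X)
    (Xs : ℕ → EuclideanSpace ℝ (∀ i, Fin (n i)))
    (hrank : ∀ j : ℕ, hosvdRankLE n r (Xs (j + 1)))
    (hiter : ∀ j : ℕ,
      ‖(Xs j + (ContinuousLinearMap.adjoint A) (y - A (Xs j))) - Xs (j + 1)‖
        ≤ (1 + ε) * ‖(Xs j + (ContinuousLinearMap.adjoint A) (y - A (Xs j))) - X‖) :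
    Filter.Tendsto Xs Filter.atTop (nhds X) := by
  obtain ⟨ha0, ha1⟩ := ha
  set C : ℝ := 1 + Real.sqrt (1 + δ) * ‖A‖ with hC
  clear_value C
  have hsq0 : 0 ≤ Real.sqrt (1 + δ) * ‖A‖ :=
    mul_nonneg (Real.sqrt_nonneg _) (norm_nonneg _)
  have hC1 : (1:ℝ) ≤ C := by rw [hC]; linarith
  have hC0 : (0:ℝ) < C := lt_of_lt_of_le one_pos hC1
  have hε0 : 0 ≤ ε := by rw [hε]; positivity
  have hε1 : ε ≤ 1 := by
    rw [hε, div_le_one (by positivity)]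
    nlinarith
  -- TRIP consequences
  have hq : ∀ Z, hosvdRankLE n (fun k => 3 * r k) Z →
      |‖Z‖ ^ 2 - ‖A Z‖ ^ 2| ≤ δ * ‖Z‖ ^ 2 := by
    intro Z hZ
    obtain ⟨h1, h2⟩ := hTRIP Z hZ
    rw [abs_le]
    constructor <;> nlinarith
  have hAle : ∀ Z, hosvdRankLE n (fun k => 3 * r k) Z →
      ‖A Z‖ ≤ Real.sqrt (1 + δ) * ‖Z‖ := by
    intro Z hZ
    obtain ⟨_, h2⟩ := hTRIP Z hZ
    have h3 : ‖A Z‖ ^ 2 ≤ (Real.sqrt (1 + δ) * ‖Z‖) ^ 2 := by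
      rw [mul_pow, Real.sq_sqrt (by linarith : (0:ℝ) ≤ 1 + δ)]
      exact h2
    nlinarith [norm_nonneg (A Z), mul_nonneg (Real.sqrt_nonneg (1 + δ)) (norm_nonneg Z)]
  -- the contraction step
  have key : ∀ j : ℕ, hosvdRankLE n r (Xs j) →
      ‖Xs (j + 1) - X‖ ≤ 3 / 4 * a * ‖Xs j - X‖ := by
    intro j hj
    set u : EuclideanSpace ℝ (∀ i, Fin (n i)) := Xs j - X with hu
    set v : EuclideanSpace ℝ (∀ i, Fin (n i)) := Xs (j + 1) - X with hv
    set Y : EuclideanSpace ℝ (∀ i, Fin (n i)) :=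
      Xs j + (ContinuousLinearMap.adjoint A) (y - A (Xs j)) with hY
    -- rank of combinations
    have hcomb : ∀ s t : ℝ, hosvdRankLE n (fun k => 3 * r k) (s • u + t • v) := by
      intro s t
      have hrw : s • u + t • v
          = (-(s + t)) • X + s • Xs j + t • Xs (j + 1) := by
        rw [hu, hv]; module
      rw [hrw]
      exact hosvd_comb hX hj (hrank j) _ _ _
    have hu3 : hosvdRankLE n (fun k => 3 * r k) u := by
      have := hcomb 1 0
      simpa using this
    -- Y - X = u - A* (A u)
    have hYX : Y - X = u - (ContinuousLinearMap.adjoint A) (A u) := by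
      rw [hY, hy, hu]
      have : A X - A (Xs j) = -(A (Xs j - X)) := by rw [map_sub]; abel
      rw [← map_sub A X (Xs j)] at this ⊢
      rw [this, map_neg]
      abel
    -- inner product bound
    have hIP : |(inner ℝ v (Y - X) : ℝ)| ≤ δ * (‖u‖ * ‖v‖) := by
      have hinner_eq : (inner ℝ v (Y - X) : ℝ) = inner ℝ v u - inner ℝ (A v) (A u) := by
        rw [hYX, inner_sub_right, ContinuousLinearMap.adjoint_inner_right]
      rw [hinner_eq]
      have h := polar_bound A δ v u (fun s t => by
        have hc := hcomb t s
        rw [add_comm] at hc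
        exact hq _ hc)
      calc |(inner ℝ v u : ℝ) - inner ℝ (A v) (A u)| ≤ δ * (‖v‖ * ‖u‖) := h
        _ = δ * (‖u‖ * ‖v‖) := by ring
    -- norm bound on Y - X
    have hAu : ‖A u‖ ≤ Real.sqrt (1 + δ) * ‖u‖ := hAle u hu3
    have hadj : ‖ContinuousLinearMap.adjoint A‖ = ‖A‖ :=
      LinearIsometryEquiv.norm_map ContinuousLinearMap.adjoint A
    have hYXnorm : ‖Y - X‖ ≤ C * ‖u‖ := by
      rw [hYX]
      calc ‖u - (ContinuousLinearMap.adjoint A) (A u)‖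
          ≤ ‖u‖ + ‖(ContinuousLinearMap.adjoint A) (A u)‖ := norm_sub_le _ _
        _ ≤ ‖u‖ + ‖ContinuousLinearMap.adjoint A‖ * ‖A u‖ := by
            gcongr
            exact (ContinuousLinearMap.adjoint A).le_opNorm (A u)
        _ ≤ ‖u‖ + ‖A‖ * (Real.sqrt (1 + δ) * ‖u‖) := by
            rw [hadj]
            gcongr
        _ = C * ‖u‖ := by rw [hC]; ring
    -- the expansion
    have hiterj := hiter j
    rw [← hY] at hiterj
    have hYv : Y - Xs (j + 1) = (Y - X) - v := by rw [hv]; abel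
    have hsq : ‖Y - Xs (j + 1)‖ ^ 2 ≤ (1 + ε) ^ 2 * ‖Y - X‖ ^ 2 := by
      have h1 : (0:ℝ) ≤ ‖Y - Xs (j + 1)‖ := norm_nonneg _
      have h2 : (0:ℝ) ≤ (1 + ε) * ‖Y - X‖ :=
        mul_nonneg (by linarith) (norm_nonneg _)
      nlinarith
    have hexp : ‖Y - Xs (j + 1)‖ ^ 2
        = ‖Y - X‖ ^ 2 - 2 * (inner ℝ (Y - X) v : ℝ) + ‖v‖ ^ 2 := by
      rw [hYv]
      exact norm_sub_sq_real (Y - X) v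
    have h5 : ‖v‖ ^ 2 ≤ ((1 + ε) ^ 2 - 1) * ‖Y - X‖ ^ 2 + 2 * (inner ℝ (Y - X) v : ℝ) := by
      nlinarith
    have hYX2 : ‖Y - X‖ ^ 2 ≤ C ^ 2 * ‖u‖ ^ 2 := by
      nlinarith [norm_nonneg (Y - X), mul_nonneg hC0.le (norm_nonneg u)]
    have hIP' : (inner ℝ (Y - X) v : ℝ) ≤ δ * (‖u‖ * ‖v‖) := by
      have := abs_le.mp hIP
      rw [real_inner_comm]
      exact this.2
    have hfac : (0:ℝ) ≤ (1 + ε) ^ 2 - 1 := by nlinarith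
    have h6 : ‖v‖ ^ 2 ≤ ((1 + ε) ^ 2 - 1) * C ^ 2 * ‖u‖ ^ 2
        + 2 * δ * (‖u‖ * ‖v‖) := by
      have := mul_le_mul_of_nonneg_left hYX2 hfac
      nlinarith
    have hκ : ((1 + ε) ^ 2 - 1) * C ^ 2 ≤ 3 / 17 * a ^ 2 := by
      have h7 : (1 + ε) ^ 2 - 1 ≤ 3 * ε := by nlinarith
      have h8 : ((1 + ε) ^ 2 - 1) * C ^ 2 ≤ 3 * ε * C ^ 2 :=
        mul_le_mul_of_nonneg_right h7 (sq_nonneg C)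
      have h9 : 3 * ε * C ^ 2 = 3 / 17 * a ^ 2 := by
        rw [hε]
        field_simp
      linarith
    have h10 : ‖v‖ ^ 2 ≤ 3 / 17 * a ^ 2 * ‖u‖ ^ 2 + a / 2 * (‖u‖ * ‖v‖) := by
      have hmm : ((1 + ε) ^ 2 - 1) * C ^ 2 * ‖u‖ ^ 2 ≤ 3 / 17 * a ^ 2 * ‖u‖ ^ 2 :=
        mul_le_mul_of_nonneg_right hκ (sq_nonneg _)
      have hdd : 2 * δ * (‖u‖ * ‖v‖) ≤ a / 2 * (‖u‖ * ‖v‖) := by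
        have : (0:ℝ) ≤ ‖u‖ * ‖v‖ := mul_nonneg (norm_nonneg _) (norm_nonneg _)
        nlinarith
      linarith
    -- solve the quadratic inequality
    show ‖v‖ ≤ 3 / 4 * a * ‖u‖
    exact quad_solve a ‖u‖ ‖v‖ ha0 (norm_nonneg u) (norm_nonneg v) h10
  -- geometric decay from step 1 on
  set ρ : ℝ := 3 / 4 * a with hρ
  have hρ0 : 0 ≤ ρ := by rw [hρ]; linarith
  have hρ1 : ρ < 1 := by rw [hρ]; linarith
  have hgeo : ∀ j : ℕ, ‖Xs (j + 1) - X‖ ≤ ρ ^ j * ‖Xs 1 - X‖ := by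
    intro j
    induction j with
    | zero => simp
    | succ k ih =>
      calc ‖Xs (k + 1 + 1) - X‖ ≤ ρ * ‖Xs (k + 1) - X‖ := key (k + 1) (hrank k)
        _ ≤ ρ * (ρ ^ k * ‖Xs 1 - X‖) := mul_le_mul_of_nonneg_left ih hρ0
        _ = ρ ^ (k + 1) * ‖Xs 1 - X‖ := by ring
  have hlim : Filter.Tendsto (fun j : ℕ => ρ ^ j * ‖Xs 1 - X‖)
      Filter.atTop (nhds 0) := by
    have h := tendsto_pow_atTop_nhds_zero_of_lt_one hρ0 hρ1
    simpa using h.mul_const ‖Xs 1 - X‖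
  have h0 : Filter.Tendsto (fun j : ℕ => ‖Xs (j + 1) - X‖)
      Filter.atTop (nhds 0) :=
    squeeze_zero (fun j => norm_nonneg _) hgeo hlim
  have h1 : Filter.Tendsto (fun j : ℕ => Xs (j + 1)) Filter.atTop (nhds X) := by
    rw [tendsto_iff_norm_sub_tendsto_zero]
    exact h0
  exact (Filter.tendsto_add_atTop_iff_nat 1).mp h1
end
end

section
/- Let d ≥ 2, m, n_1,…,n_d be positive integers, r = (r_1,…,r_d) a tuple of positive integers, and a ∈ (0,1). Let A : ℝ^{n_1×⋯×n_d} → ℝ^m be a linear map satisfying the HOSVD-TRIP at rank 3r = (3r_1,…,3r_d) with constant δ ≤ a/4, and set ε = a²/(17·(1+√(1+δ)·‖A‖_{2→2})²) and b = 2√(1+δ) + √(4ε+2ε²)·‖A‖_{2→2}. Let X and X' be tensors of HOSVD-rank at most r, let e ∈ ℝ^m, and set Y = X' + A*(A(X) + e − A(X')). If X'' is a tensor of HOSVD-rank at most r satisfying ‖Y − X''‖_F ≤ (1+ε)·‖Y − X‖_F, then ‖X'' − X‖_F ≤ a·‖X' − X‖_F + b·‖e‖_2. -/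
open scoped BigOperators

noncomputable section

lemma myrank_add_le {m n : Type*} [Fintype n] (A B : Matrix m n ℝ) :
    (A + B).rank ≤ A.rank + B.rank := by
  classical
  unfold Matrix.rank
  rw [Matrix.mulVecLin_add]
  refine le_trans (Submodule.finrank_mono ?_) (Submodule.finrank_add_le_finrank_add_finrank _ _)
  rintro x ⟨y, rfl⟩
  exact Submodule.add_mem_sup ⟨y, rfl⟩ ⟨y, rfl⟩

lemma myrank_smul_le {m n : Type*} [Fintype n] (c : ℝ) (A : Matrix m n ℝ) :
    (c • A).rank ≤ A.rank := by
  classical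
  unfold Matrix.rank
  rw [show ((c • A).mulVecLin) = c • A.mulVecLin by
    ext v i; simp [Matrix.mulVecLin, Matrix.smul_mulVec]]
  refine Submodule.finrank_mono ?_
  rintro x ⟨y, rfl⟩
  exact ⟨c • y, by simp⟩

lemma hosvd_comb_s4 {d : ℕ} (n r : Fin d → ℕ)
    (X X' X'' : EuclideanSpace ℝ (∀ i, Fin (n i)))
    (hX : hosvdRankLE n r X) (hX' : hosvdRankLE n r X') (hX'' : hosvdRankLE n r X'')
    (α β γ : ℝ) :
    hosvdRankLE n (fun k => 3 * r k) (α • X + β • X' + γ • X'') := by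
  intro k
  have h : unfold n k (fun j => (α • X + β • X' + γ • X'') j)
      = α • unfold n k (fun j => X j) + β • unfold n k (fun j => X' j)
        + γ • unfold n k (fun j => X'' j) := by
    ext i j
    simp [unfold, PiLp.add_apply, PiLp.smul_apply, Matrix.add_apply, Matrix.smul_apply,
      smul_eq_mul]
  rw [h]
  calc (α • unfold n k (fun j => X j) + β • unfold n k (fun j => X' j)
        + γ • unfold n k (fun j => X'' j)).rank
      ≤ (α • unfold n k (fun j => X j) + β • unfold n k (fun j => X' j)).rank
        + (γ • unfold n k (fun j => X'' j)).rank := myrank_add_le _ _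
    _ ≤ ((α • unfold n k (fun j => X j)).rank + (β • unfold n k (fun j => X' j)).rank)
        + (γ • unfold n k (fun j => X'' j)).rank := by
        exact add_le_add (myrank_add_le _ _) le_rfl
    _ ≤ r k + r k + r k := by
        refine add_le_add (add_le_add ?_ ?_) ?_
        · exact le_trans (myrank_smul_le _ _) (hX k)
        · exact le_trans (myrank_smul_le _ _) (hX' k)
        · exact le_trans (myrank_smul_le _ _) (hX'' k)
    _ ≤ 3 * r k := by omega

lemma quad_resolve {t p s : ℝ} (ht0 : 0 ≤ t) (hp : 0 ≤ p) (hs : 0 ≤ s)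
    (h : t ^ 2 ≤ p * t + s ^ 2) : t ≤ p + s := by
  nlinarith [sq_nonneg (t - s), mul_nonneg hp ht0, mul_nonneg hp hs, mul_nonneg ht0 hs]

lemma sq_le_imp_le {x y : ℝ} (hx : 0 ≤ x) (hy : 0 ≤ y) (h : x ^ 2 ≤ y ^ 2) : x ≤ y := by
  nlinarith [sq_nonneg (x - y), sq_nonneg (x + y)]

set_option maxHeartbeats 2000000 in
theorem classical_TIHT_one_step
    (d m : ℕ) (hd : 2 ≤ d) (hm : 0 < m) (n r : Fin d → ℕ)
    (hn : ∀ i, 0 < n i) (hr : ∀ i, 0 < r i)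
    (a : ℝ) (ha : a ∈ Set.Ioo (0 : ℝ) 1)
    (A : EuclideanSpace ℝ (∀ i, Fin (n i)) →L[ℝ] EuclideanSpace ℝ (Fin m))
    (δ : ℝ) (hδ0 : 0 ≤ δ) (hδa : δ ≤ a / 4)
    (hTRIP : ∀ Z : EuclideanSpace ℝ (∀ i, Fin (n i)),
      hosvdRankLE n (fun k => 3 * r k) Z →
        (1 - δ) * ‖Z‖ ^ 2 ≤ ‖A Z‖ ^ 2 ∧ ‖A Z‖ ^ 2 ≤ (1 + δ) * ‖Z‖ ^ 2)
    (ε b : ℝ)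
    (hε : ε = a ^ 2 / (17 * (1 + Real.sqrt (1 + δ) * ‖A‖) ^ 2))
    (hb : b = 2 * Real.sqrt (1 + δ) + Real.sqrt (4 * ε + 2 * ε ^ 2) * ‖A‖)
    (X X' : EuclideanSpace ℝ (∀ i, Fin (n i)))
    (hX : hosvdRankLE n r X) (hX' : hosvdRankLE n r X')
    (e : EuclideanSpace ℝ (Fin m))
    (Y : EuclideanSpace ℝ (∀ i, Fin (n i)))
    (hY : Y = X' + (ContinuousLinearMap.adjoint A) (A X + e - A X'))
    (X'' : EuclideanSpace ℝ (∀ i, Fin (n i))) (hX'' : hosvdRankLE n r X'')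
    (hthr : ‖Y - X''‖ ≤ (1 + ε) * ‖Y - X‖) :
    ‖X'' - X‖ ≤ a * ‖X' - X‖ + b * ‖e‖ := by
  obtain ⟨ha0, ha1⟩ := ha
  have hs0 : (0:ℝ) ≤ Real.sqrt (1 + δ) := Real.sqrt_nonneg _
  set c : ℝ := 1 + Real.sqrt (1 + δ) * ‖A‖ with hc
  clear_value c
  have hc1 : (1:ℝ) ≤ c := hc ▸ le_add_of_nonneg_right (mul_nonneg hs0 (norm_nonneg _))
  have hc0 : (0:ℝ) < c := lt_of_lt_of_le one_pos hc1
  have hεpos : 0 < ε := by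
    rw [hε]
    exact div_pos (pow_pos ha0 2) (by nlinarith [pow_pos hc0 2])
  set u : EuclideanSpace ℝ (∀ i, Fin (n i)) := X' - X with hu
  set v : EuclideanSpace ℝ (∀ i, Fin (n i)) := X'' - X with hv
  clear_value u v
  have comb := hosvd_comb_s4 n r X X' X'' hX hX' hX''
  have hu3 : hosvdRankLE n (fun k => 3 * r k) u := by
    have := comb (-1) 1 0
    have he : u = (-1:ℝ) • X + (1:ℝ) • X' + (0:ℝ) • X'' := by rw [hu]; module
    rwa [← he] at this
  have hv3 : hosvdRankLE n (fun k => 3 * r k) v := by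
    have := comb (-1) 0 1
    have he : v = (-1:ℝ) • X + (0:ℝ) • X' + (1:ℝ) • X'' := by rw [hv]; module
    rwa [← he] at this
  -- norm bounds under A
  have hAnorm : ∀ (z : EuclideanSpace ℝ (∀ i, Fin (n i))),
      hosvdRankLE n (fun k => 3 * r k) z → ‖A z‖ ≤ Real.sqrt (1 + δ) * ‖z‖ := by
    intro z hz
    have h := (hTRIP z hz).2
    calc ‖A z‖ = Real.sqrt (‖A z‖ ^ 2) := (Real.sqrt_sq (norm_nonneg _)).symm
      _ ≤ Real.sqrt ((1 + δ) * ‖z‖ ^ 2) := Real.sqrt_le_sqrt h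
      _ = Real.sqrt (1 + δ) * ‖z‖ := by
          rw [Real.sqrt_mul (by linarith), Real.sqrt_sq (norm_nonneg _)]
  have hAu : ‖A u‖ ≤ Real.sqrt (1 + δ) * ‖u‖ := hAnorm u hu3
  have hAv : ‖A v‖ ≤ Real.sqrt (1 + δ) * ‖v‖ := hAnorm v hv3
  -- polarization-type inner product bound
  have hIP : (inner ℝ (u) (v) : ℝ) - (inner ℝ (A u) (A v) : ℝ) ≤ δ * (‖u‖ * ‖v‖) := by
    by_cases h0 : ‖u‖ * ‖v‖ = 0
    · rcases mul_eq_zero.mp h0 with h | h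
      · have : u = 0 := norm_eq_zero.mp h
        simp [this, h0, mul_nonneg hδ0]
      · have : v = 0 := norm_eq_zero.mp h
        simp [this, h0, mul_nonneg hδ0]
    · have hP : 0 < ‖u‖ * ‖v‖ :=
        lt_of_le_of_ne (mul_nonneg (norm_nonneg _) (norm_nonneg _)) (Ne.symm h0)
      set p : EuclideanSpace ℝ (∀ i, Fin (n i)) := ‖v‖ • u + ‖u‖ • v with hpd
      set q : EuclideanSpace ℝ (∀ i, Fin (n i)) := ‖v‖ • u - ‖u‖ • v with hqd
      clear_value p q
      have hp3 : hosvdRankLE n (fun k => 3 * r k) p := by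
        have := comb (-(‖v‖ + ‖u‖)) ‖v‖ ‖u‖
        have he : p = (-(‖v‖ + ‖u‖)) • X + ‖v‖ • X' + ‖u‖ • X'' := by
          rw [hpd, hu, hv]; module
        rwa [← he] at this
      have hq3 : hosvdRankLE n (fun k => 3 * r k) q := by
        have := comb (‖u‖ - ‖v‖) ‖v‖ (-‖u‖)
        have he : q = (‖u‖ - ‖v‖) • X + ‖v‖ • X' + (-‖u‖) • X'' := by
          rw [hqd, hu, hv]; module
        rwa [← he] at this
      have h1 := (hTRIP p hp3).1
      have h2 := (hTRIP q hq3).2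
      have hAp : A p = ‖v‖ • A u + ‖u‖ • A v := by rw [hpd]; simp
      have hAq : A q = ‖v‖ • A u - ‖u‖ • A v := by rw [hqd]; simp
      have ep : ‖p‖ ^ 2 = ‖v‖^2 * ‖u‖^2 + 2 * (‖v‖ * ‖u‖ * (inner ℝ (u) (v) : ℝ)) + ‖u‖^2 * ‖v‖^2 := by
        rw [hpd, @norm_add_sq_real, real_inner_smul_left, real_inner_smul_right,
          norm_smul, norm_smul]
        simp [abs_of_nonneg (norm_nonneg _)]
        ring
      have eq' : ‖q‖ ^ 2 = ‖v‖^2 * ‖u‖^2 - 2 * (‖v‖ * ‖u‖ * (inner ℝ (u) (v) : ℝ)) + ‖u‖^2 * ‖v‖^2 := by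
        rw [hqd, @norm_sub_sq_real, real_inner_smul_left, real_inner_smul_right,
          norm_smul, norm_smul]
        simp [abs_of_nonneg (norm_nonneg _)]
        ring
      have eAp : ‖A p‖ ^ 2 = ‖v‖^2 * ‖A u‖^2 + 2 * (‖v‖ * ‖u‖ * (inner ℝ (A u) (A v) : ℝ))
          + ‖u‖^2 * ‖A v‖^2 := by
        rw [hAp, @norm_add_sq_real, real_inner_smul_left, real_inner_smul_right,
          norm_smul, norm_smul]
        simp [abs_of_nonneg (norm_nonneg _)]
        ring
      have eAq : ‖A q‖ ^ 2 = ‖v‖^2 * ‖A u‖^2 - 2 * (‖v‖ * ‖u‖ * (inner ℝ (A u) (A v) : ℝ))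
          + ‖u‖^2 * ‖A v‖^2 := by
        rw [hAq, @norm_sub_sq_real, real_inner_smul_left, real_inner_smul_right,
          norm_smul, norm_smul]
        simp [abs_of_nonneg (norm_nonneg _)]
        ring
      rw [ep, eAp] at h1
      rw [eq', eAq] at h2
      have key : (‖u‖ * ‖v‖) * ((inner ℝ (u) (v) : ℝ) - (inner ℝ (A u) (A v) : ℝ)) ≤ δ * (‖u‖^2 * ‖v‖^2) := by
        linarith [h1, h2]
      nlinarith [key, hP]
  -- decomposition of Y - X
  have hAdj : (ContinuousLinearMap.adjoint A) (A u)
      = (ContinuousLinearMap.adjoint A) (A X') - (ContinuousLinearMap.adjoint A) (A X) := by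
    rw [show A u = A X' - A X from by rw [hu, map_sub], map_sub]
  have hw : Y - X = u + ((ContinuousLinearMap.adjoint A) e
      - (ContinuousLinearMap.adjoint A) (A u)) := by
    rw [hY, hAdj, hu]
    simp only [map_add, map_sub]
    abel
  have hwv : (inner ℝ (Y - X) (v) : ℝ) = (inner ℝ (u) (v) : ℝ) + (inner ℝ (e) (A v) : ℝ) - (inner ℝ (A u) (A v) : ℝ) := by
    have e1 : (inner ℝ ((ContinuousLinearMap.adjoint A) e
        - (ContinuousLinearMap.adjoint A) (A u)) v : ℝ)
        = (inner ℝ e (A v) : ℝ) - (inner ℝ (A u) (A v) : ℝ) := by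
      rw [inner_sub_left, ContinuousLinearMap.adjoint_inner_left A v e,
        ContinuousLinearMap.adjoint_inner_left A v (A u)]
    rw [hw, inner_add_left, e1]
    ring
  have hev : (inner ℝ (e) (A v) : ℝ) ≤ ‖e‖ * (Real.sqrt (1 + δ) * ‖v‖) := by
    calc (inner ℝ (e) (A v) : ℝ) ≤ ‖e‖ * ‖A v‖ := real_inner_le_norm _ _
      _ ≤ ‖e‖ * (Real.sqrt (1 + δ) * ‖v‖) :=
          mul_le_mul_of_nonneg_left hAv (norm_nonneg _)
  -- norm bound on Y - X
  have hadjnorm : ‖(ContinuousLinearMap.adjoint A)‖ = ‖A‖ := by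
    exact (ContinuousLinearMap.adjoint : _ ≃ₗᵢ⋆[ℝ] _).norm_map A
  have hR : ‖Y - X‖ ≤ c * ‖u‖ + ‖A‖ * ‖e‖ := by
    have h1 : ‖Y - X‖ ≤ ‖u‖ + (‖(ContinuousLinearMap.adjoint A) e‖
        + ‖(ContinuousLinearMap.adjoint A) (A u)‖) := by
      rw [hw]
      exact le_trans (norm_add_le _ _) (by gcongr; exact norm_sub_le _ _)
    have h2 : ‖(ContinuousLinearMap.adjoint A) e‖ ≤ ‖A‖ * ‖e‖ := by
      have := (ContinuousLinearMap.adjoint A).le_opNorm e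
      rwa [hadjnorm] at this
    have h3 : ‖(ContinuousLinearMap.adjoint A) (A u)‖ ≤ ‖A‖ * (Real.sqrt (1 + δ) * ‖u‖) := by
      have h := (ContinuousLinearMap.adjoint A).le_opNorm (A u)
      rw [hadjnorm] at h
      exact le_trans h (mul_le_mul_of_nonneg_left hAu (norm_nonneg _))
    rw [hc]
    linarith [h1, h2, h3]
  -- main quadratic inequality
  have hsq : ‖v‖ ^ 2 ≤ 2 * (inner ℝ (Y - X) (v) : ℝ) + (2 * ε + ε ^ 2) * ‖Y - X‖ ^ 2 := by
    have h1 : ‖Y - X''‖ ^ 2 ≤ ((1 + ε) * ‖Y - X‖) ^ 2 :=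
      pow_le_pow_left₀ (norm_nonneg _) hthr 2
    have h2 : Y - X'' = (Y - X) - v := by rw [hv]; abel
    have h3 : ‖(Y - X) - v‖ ^ 2 = ‖Y - X‖ ^ 2 - 2 * (inner ℝ (Y - X) (v) : ℝ) + ‖v‖ ^ 2 :=
      norm_sub_sq_real _ _
    rw [h2, h3] at h1
    linarith [h1]
  have hRR : (2 * ε + ε ^ 2) * ‖Y - X‖ ^ 2 ≤ (2 * ε + ε ^ 2) * (c * ‖u‖ + ‖A‖ * ‖e‖) ^ 2 := by
    have := pow_le_pow_left₀ (norm_nonneg (Y - X)) hR 2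
    exact mul_le_mul_of_nonneg_left this (by positivity)
  rw [hwv] at hsq
  have big : ‖v‖ ^ 2 ≤ (2 * (δ * ‖u‖) + 2 * (Real.sqrt (1 + δ) * ‖e‖)) * ‖v‖
      + (2 * ε + ε ^ 2) * (c * ‖u‖ + ‖A‖ * ‖e‖) ^ 2 := by
    linarith [hsq, hIP, hev, hRR]
  -- resolve the quadratic
  set S2 : ℝ := Real.sqrt (2 * ε + ε ^ 2) with hS2d
  have hS2sq : S2 ^ 2 = 2 * ε + ε ^ 2 := Real.sq_sqrt (by positivity)
  have hS2nn : 0 ≤ S2 := hS2d ▸ Real.sqrt_nonneg _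
  clear_value S2
  set R : ℝ := c * ‖u‖ + ‖A‖ * ‖e‖ with hRd
  clear_value R
  have hRnn : 0 ≤ R := by
    rw [hRd]
    exact add_nonneg (mul_nonneg hc0.le (norm_nonneg u))
      (mul_nonneg (norm_nonneg A) (norm_nonneg e))
  have hpnn : 0 ≤ 2 * (δ * ‖u‖) + 2 * (Real.sqrt (1 + δ) * ‖e‖) := by positivity
  have hbig2 : ‖v‖ ^ 2 ≤ (2 * (δ * ‖u‖) + 2 * (Real.sqrt (1 + δ) * ‖e‖)) * ‖v‖
      + (S2 * R) ^ 2 := by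
    have hSR : (S2 * R) ^ 2 = (2 * ε + ε ^ 2) * R ^ 2 := by rw [mul_pow, hS2sq]
    rw [hSR]
    exact big
  have ht : ‖v‖ ≤ (2 * (δ * ‖u‖) + 2 * (Real.sqrt (1 + δ) * ‖e‖)) + S2 * R :=
    quad_resolve (norm_nonneg v) hpnn (mul_nonneg hS2nn hRnn) hbig2
  -- numerics
  have hεc : ε * c ^ 2 = a ^ 2 / 17 := by
    have hcne : c ≠ 0 := ne_of_gt hc0
    rw [hε]; field_simp
  have hεsmall : ε ≤ 1 / 17 := by
    have hc2 : (1:ℝ) ≤ c ^ 2 := by nlinarith [hc1]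
    have h1 : ε ≤ ε * c ^ 2 := le_mul_of_one_le_right hεpos.le hc2
    have h2 : a ^ 2 / 17 ≤ 1 / 17 := by nlinarith [ha0, ha1]
    linarith [hεc ▸ h1]
  have hqbound : (2 * ε + ε ^ 2) * c ^ 2 ≤ a ^ 2 / 4 := by
    have h3 : ε ^ 2 * c ^ 2 = ε * (a ^ 2 / 17) := by rw [← hεc]; ring
    have h4 : ε * (a ^ 2 / 17) ≤ (1 / 17) * (a ^ 2 / 17) :=
      mul_le_mul_of_nonneg_right hεsmall (by positivity)
    linarith [hεc, h3, h4, sq_nonneg a]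
  have hS2c : S2 * c ≤ a / 2 := by
    refine sq_le_imp_le (mul_nonneg hS2nn (le_of_lt hc0)) (by linarith) ?_
    calc (S2 * c) ^ 2 = (2 * ε + ε ^ 2) * c ^ 2 := by rw [mul_pow, hS2sq]
      _ ≤ a ^ 2 / 4 := hqbound
      _ = (a / 2) ^ 2 := by ring
  have hS2b : S2 ≤ Real.sqrt (4 * ε + 2 * ε ^ 2) := by
    rw [hS2d]
    exact Real.sqrt_le_sqrt (by nlinarith [hεpos])
  -- finish
  have h_1 : 2 * (δ * ‖u‖) ≤ a / 2 * ‖u‖ := by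
    calc 2 * (δ * ‖u‖) = (2 * δ) * ‖u‖ := by ring
      _ ≤ (a / 2) * ‖u‖ := mul_le_mul_of_nonneg_right (by linarith) (norm_nonneg u)
  have h_2 : S2 * c * ‖u‖ ≤ a / 2 * ‖u‖ :=
    mul_le_mul_of_nonneg_right hS2c (norm_nonneg u)
  have h_3 : S2 * (‖A‖ * ‖e‖) ≤ Real.sqrt (4 * ε + 2 * ε ^ 2) * (‖A‖ * ‖e‖) :=
    mul_le_mul_of_nonneg_right hS2b (mul_nonneg (norm_nonneg A) (norm_nonneg e))
  rw [hb]
  have hexp : S2 * R = S2 * c * ‖u‖ + S2 * (‖A‖ * ‖e‖) := by rw [hRd]; ring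
  calc ‖v‖ ≤ (2 * (δ * ‖u‖) + 2 * (Real.sqrt (1 + δ) * ‖e‖)) + S2 * R := ht
    _ = 2 * (δ * ‖u‖) + S2 * c * ‖u‖ + (2 * (Real.sqrt (1 + δ) * ‖e‖) + S2 * (‖A‖ * ‖e‖)) := by
        rw [hexp]; ring
    _ ≤ a / 2 * ‖u‖ + a / 2 * ‖u‖
        + (2 * (Real.sqrt (1 + δ) * ‖e‖) + Real.sqrt (4 * ε + 2 * ε ^ 2) * (‖A‖ * ‖e‖)) := by
        linarith [h_1, h_2, h_3]
    _ = a * ‖u‖ + (2 * Real.sqrt (1 + δ) + Real.sqrt (4 * ε + 2 * ε ^ 2) * ‖A‖) * ‖e‖ := by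
        ring
end
end

section
/- Let d ≥ 1, let n_1,…,n_d and r_1,…,r_d be positive integers, and fix j ∈ {1,…,d}. Let S : Fin r_1 × ⋯ × Fin r_d → ℝ be a tensor whose mode-j subtensors are pairwise orthogonal, i.e., for all p ≠ q in Fin r_j, Σ over all multi-indices k with k_j = p paired against the corresponding multi-index with k_j replaced by q of S(k)·S(k with k_j := q) equals 0 (⟨S_{k_j=p}, S_{k_j=q}⟩ = 0). For each l ≠ j let U_l ∈ ℝ^{n_l×r_l} be a matrix with orthonormal columns, and let V ∈ ℝ^{n_j×r_j} be arbitrary. Define the tensor Y : Fin n_1 × ⋯ × Fin n_d → ℝ by Y(i_1,…,i_d) = Σ_{k_1,…,k_d} S(k_1,…,k_d)·V(i_j,k_j)·Π_{l≠j} U_l(i_l,k_l). Then ‖Y‖_F ≤ ‖V‖_{1,2}·‖S‖_F, where ‖V‖_{1,2} = max_{k} (Σ_{i} V(i,k)²)^{1/2} is the maximal Euclidean column norm of V. -/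
open scoped BigOperators

noncomputable section

/-- Frobenius norm of a tensor given as a real-valued function on a finite index set. -/
def frob {ι : Type*} [Fintype ι] (X : ι → ℝ) : ℝ :=
  Real.sqrt (∑ j, X j ^ 2)

theorem tucker_product_general_factor_bound
    (d : ℕ) (hd : 1 ≤ d) (n r : Fin d → ℕ)
    (hn : ∀ i, 0 < n i) (hr : ∀ i, 0 < r i)
    (j : Fin d) (S : (∀ i, Fin (r i)) → ℝ)
    (horth : ∀ p q : Fin (r j), p ≠ q →
      ∑ k : ∀ i, Fin (r i), S (Function.update k j p) * S (Function.update k j q) = 0)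
    (U : ∀ l, Matrix (Fin (n l)) (Fin (r l)) ℝ)
    (hU : ∀ l, l ≠ j → (U l).transpose * U l = 1)
    (V : Matrix (Fin (n j)) (Fin (r j)) ℝ) :
    frob (fun i : ∀ l, Fin (n l) => ∑ k : ∀ l, Fin (r l),
        S k * V (i j) (k j) * ∏ l ∈ Finset.univ.erase j, U l (i l) (k l))
      ≤ (⨆ c : Fin (r j), Real.sqrt (∑ i, V i c ^ 2)) * frob S := by
  classical
  have hjpos : 0 < r j := hr j
  haveI : Nonempty (Fin (r j)) := ⟨⟨0, hjpos⟩⟩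
  set M := (⨆ c : Fin (r j), Real.sqrt (∑ i, V i c ^ 2)) with hMdef
  have hMge : ∀ p : Fin (r j), Real.sqrt (∑ i, V i p ^ 2) ≤ M := fun p =>
    le_ciSup (f := fun c : Fin (r j) => Real.sqrt (∑ i, V i c ^ 2))
      (Set.Finite.bddAbove (Set.finite_range _)) p
  have hM0 : 0 ≤ M := le_trans (Real.sqrt_nonneg _) (hMge (Classical.arbitrary _))
  set E := Finset.univ.erase j with hE
  set C : Fin (r j) → Fin (r j) → ℝ := fun p q => ∑ b, V b p * V b q with hC
  have hCdiag : ∀ p, C p p ≤ M ^ 2 := by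
    intro p
    have h1 : C p p = Real.sqrt (∑ i, V i p ^ 2) ^ 2 := by
      rw [Real.sq_sqrt (by positivity)]
      simp [hC, sq]
    rw [h1]
    exact pow_le_pow_left₀ (Real.sqrt_nonneg _) (hMge p) 2
  -- replacement-sum lemma
  have L2 : ∀ f : (∀ l, Fin (r l)) → ℝ,
      ∑ k : ∀ l, Fin (r l), ∑ p : Fin (r j), f (Function.update k j p)
        = (r j : ℝ) * ∑ k, f k := by
    intro f
    have hinv : ∀ x : (∀ l, Fin (r l)) × Fin (r j),
        (Function.update (Function.update x.1 j x.2) j (x.1 j), Function.update x.1 j x.2 j)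
          = x := by
      intro x
      simp [Function.update_idem, Function.update_self, Function.update_eq_self,
        Prod.ext_iff]
    calc ∑ k : ∀ l, Fin (r l), ∑ p : Fin (r j), f (Function.update k j p)
        = ∑ x : (∀ l, Fin (r l)) × Fin (r j), f (Function.update x.1 j x.2) := by
          rw [Fintype.sum_prod_type]
      _ = ∑ x : (∀ l, Fin (r l)) × Fin (r j), f x.1 := by
          exact Fintype.sum_equiv
            { toFun := fun x => (Function.update x.1 j x.2, x.1 j)
              invFun := fun x => (Function.update x.1 j x.2, x.1 j)
              left_inv := fun x => hinv x
              right_inv := fun x => hinv x } _ _ (fun x => rfl)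
      _ = ∑ k : ∀ l, Fin (r l), ∑ _p : Fin (r j), f k := by
          rw [Fintype.sum_prod_type]
      _ = (r j : ℝ) * ∑ k, f k := by
          simp [Finset.sum_const, Finset.card_univ, Finset.mul_sum, nsmul_eq_mul]
  -- selection lemma
  have hsel : ∀ (k : ∀ l, Fin (r l)) (f : (∀ l, Fin (r l)) → ℝ),
      (∑ k' : ∀ l, Fin (r l), if ∀ l ∈ E, k l = k' l then f k' else 0)
        = ∑ q : Fin (r j), f (Function.update k j q) := by
    intro k f
    rw [← Finset.sum_filter]
    have hupd : ∀ a : ∀ l, Fin (r l), (∀ l ∈ E, k l = a l) →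
        Function.update k j (a j) = a := by
      intro a ha
      funext l
      by_cases hlj : l = j
      · subst hlj; rw [Function.update_self]
      · rw [Function.update_of_ne hlj]
        exact ha l (Finset.mem_erase.mpr ⟨hlj, Finset.mem_univ _⟩)
    refine Finset.sum_nbij' (fun k' => k' j) (fun q => Function.update k j q)
      (fun a _ => Finset.mem_univ _) ?_ ?_ ?_ ?_
    · intro q _
      simp only [Finset.mem_filter, Finset.mem_univ, true_and]
      intro l hl
      exact (Function.update_of_ne (Finset.mem_erase.mp hl).1 _ _).symm
    · intro a ha
      simp only [Finset.mem_filter, Finset.mem_univ, true_and] at ha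
      exact hupd a ha
    · intro q _
      exact Function.update_self j q k
    · intro a ha
      simp only [Finset.mem_filter, Finset.mem_univ, true_and] at ha
      exact (congrArg f (hupd a ha)).symm
  -- factorization lemma
  have hfact : ∀ F : ∀ l, Fin (n l) → ℝ,
      (∑ i : ∀ l, Fin (n l), ∏ l, F l (i l)) = ∏ l, ∑ b, F l b := by
    intro F
    rw [Finset.prod_univ_sum, Fintype.piFinset_univ]
  have hsplit : ∀ (G : Fin (n j) → ℝ) (H : ∀ l, Fin (n l) → ℝ),
      (∑ i : ∀ l, Fin (n l), G (i j) * ∏ l ∈ E, H l (i l))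
        = (∑ b, G b) * ∏ l ∈ E, ∑ b, H l b := by
    intro G H
    set F : ∀ l, Fin (n l) → ℝ :=
      fun l b => if h : l = j then G (Fin.cast (congrArg n h) b) else H l b with hF
    have hFj : ∀ b : Fin (n j), F j b = G b := by
      intro b; simp [hF]
    have hFl : ∀ l, l ≠ j → ∀ b, F l b = H l b := by
      intro l hl b; simp [hF, hl]
    have h1 : ∀ i : ∀ l, Fin (n l), G (i j) * ∏ l ∈ E, H l (i l) = ∏ l, F l (i l) := by
      intro i
      rw [← Finset.mul_prod_erase Finset.univ (fun l => F l (i l)) (Finset.mem_univ j)]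
      rw [hFj]
      congr 1
      refine Finset.prod_congr rfl fun l hl => ?_
      exact (hFl l (Finset.mem_erase.mp hl).1 (i l)).symm
    simp_rw [h1]
    rw [hfact F]
    rw [← Finset.mul_prod_erase Finset.univ (fun l => ∑ b, F l b) (Finset.mem_univ j)]
    congr 1
    · exact Finset.sum_congr rfl fun b _ => hFj b
    · refine Finset.prod_congr rfl fun l hl => ?_
      exact Finset.sum_congr rfl fun b _ => hFl l (Finset.mem_erase.mp hl).1 b
  -- main computation of the squared Frobenius norm
  set A := ∑ i : ∀ l, Fin (n l), (∑ k : ∀ l, Fin (r l),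
      S k * V (i j) (k j) * ∏ l ∈ E, U l (i l) (k l)) ^ 2 with hAdef
  have hA : A = ∑ k : ∀ l, Fin (r l), ∑ q : Fin (r j),
      S k * S (Function.update k j q) * C (k j) q := by
    have step1 : A = ∑ k : ∀ l, Fin (r l), ∑ k' : ∀ l, Fin (r l),
        S k * S k' * ((∑ i : ∀ l, Fin (n l), (V (i j) (k j) * V (i j) (k' j)) *
          ∏ l ∈ E, (U l (i l) (k l) * U l (i l) (k' l)))) := by
      rw [hAdef]
      simp_rw [sq, Finset.sum_mul_sum]
      rw [Finset.sum_comm]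
      refine Finset.sum_congr rfl fun k _ => ?_
      rw [Finset.sum_comm]
      refine Finset.sum_congr rfl fun k' _ => ?_
      rw [Finset.mul_sum]
      refine Finset.sum_congr rfl fun i _ => ?_
      rw [Finset.prod_mul_distrib]
      ring
    rw [step1]
    refine Finset.sum_congr rfl fun k _ => ?_
    have step2 : ∀ k' : ∀ l, Fin (r l),
        (∑ i : ∀ l, Fin (n l), (V (i j) (k j) * V (i j) (k' j)) *
          ∏ l ∈ E, (U l (i l) (k l) * U l (i l) (k' l)))
          = C (k j) (k' j) * (if ∀ l ∈ E, k l = k' l then (1:ℝ) else 0) := by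
      intro k'
      rw [hsplit (fun b => V b (k j) * V b (k' j))
        (fun l b => U l b (k l) * U l b (k' l))]
      congr 1
      have : ∀ l ∈ E, (∑ b, U l b (k l) * U l b (k' l))
          = if k l = k' l then (1:ℝ) else 0 := by
        intro l hl
        have hlj : l ≠ j := (Finset.mem_erase.mp hl).1
        have := hU l hlj
        have h2 : ((U l).transpose * U l) (k l) (k' l) = (1 : Matrix _ _ ℝ) (k l) (k' l) := by
          rw [this]
        rw [Matrix.mul_apply] at h2
        simp only [Matrix.transpose_apply] at h2
        rw [Matrix.one_apply] at h2
        exact h2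
      rw [Finset.prod_congr rfl this, Finset.prod_boole]
      by_cases h : ∀ l ∈ E, k l = k' l <;> simp [h]
    calc (∑ k' : ∀ l, Fin (r l), S k * S k' *
          (∑ i : ∀ l, Fin (n l), (V (i j) (k j) * V (i j) (k' j)) *
            ∏ l ∈ E, (U l (i l) (k l) * U l (i l) (k' l))))
        = ∑ k' : ∀ l, Fin (r l),
            (if ∀ l ∈ E, k l = k' l then S k * S k' * C (k j) (k' j) else 0) := by
          refine Finset.sum_congr rfl fun k' _ => ?_
          rw [step2 k']
          by_cases h : ∀ l ∈ E, k l = k' l <;> simp [h] <;> ring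
      _ = ∑ q : Fin (r j), S k * S (Function.update k j q) * C (k j) (Function.update k j q j) :=
          hsel k (fun k' => S k * S k' * C (k j) (k' j))
      _ = ∑ q : Fin (r j), S k * S (Function.update k j q) * C (k j) q := by
          simp [Function.update_self]
  -- multiply by r j and symmetrize
  set W : Fin (r j) → Fin (r j) → ℝ :=
    fun p q => ∑ k : ∀ l, Fin (r l), S (Function.update k j p) * S (Function.update k j q)
    with hW
  have hrA : (r j : ℝ) * A = ∑ p : Fin (r j), ∑ q : Fin (r j), C p q * W p q := by
    have h1 := L2 (fun m => ∑ q : Fin (r j), S m * S (Function.update m j q) * C (m j) q)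
    rw [← hA] at h1
    rw [← h1]
    have h2 : ∀ (k : ∀ l, Fin (r l)) (p : Fin (r j)),
        (∑ q : Fin (r j), S (Function.update k j p) *
          S (Function.update (Function.update k j p) j q) * C (Function.update k j p j) q)
        = ∑ q : Fin (r j), S (Function.update k j p) * S (Function.update k j q) * C p q := by
      intro k p
      simp [Function.update_idem, Function.update_self]
    calc (∑ k : ∀ l, Fin (r l), ∑ p : Fin (r j),
          ∑ q : Fin (r j), S (Function.update k j p) *
            S (Function.update (Function.update k j p) j q) * C (Function.update k j p j) q)
        = ∑ k : ∀ l, Fin (r l), ∑ p : Fin (r j),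
            ∑ q : Fin (r j), S (Function.update k j p) * S (Function.update k j q) * C p q := by
          exact Finset.sum_congr rfl fun k _ => Finset.sum_congr rfl fun p _ => h2 k p
      _ = ∑ p : Fin (r j), ∑ k : ∀ l, Fin (r l),
            ∑ q : Fin (r j), S (Function.update k j p) * S (Function.update k j q) * C p q :=
          Finset.sum_comm
      _ = ∑ p : Fin (r j), ∑ q : Fin (r j),
            ∑ k : ∀ l, Fin (r l), S (Function.update k j p) * S (Function.update k j q) * C p q := by
          exact Finset.sum_congr rfl fun p _ => Finset.sum_comm
      _ = ∑ p : Fin (r j), ∑ q : Fin (r j), C p q * W p q := by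
          refine Finset.sum_congr rfl fun p _ => Finset.sum_congr rfl fun q _ => ?_
          rw [hW, Finset.mul_sum]
          exact Finset.sum_congr rfl fun k _ => by ring
  have hdiag : ∀ p : Fin (r j), (∑ q : Fin (r j), C p q * W p q) = C p p * W p p := by
    intro p
    refine Finset.sum_eq_single p ?_ (fun h => absurd (Finset.mem_univ p) h)
    intro q _ hq
    have h0 : W p q = 0 := horth p q (fun h => hq h.symm)
    rw [h0, mul_zero]
  have hWnonneg : ∀ p, 0 ≤ W p p := by
    intro p
    refine Finset.sum_nonneg fun k _ => mul_self_nonneg _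
  have hsumW : (∑ p : Fin (r j), W p p) = (r j : ℝ) * ∑ k, S k ^ 2 := by
    rw [← L2 (fun m => S m ^ 2)]
    rw [Finset.sum_comm]
    refine Finset.sum_congr rfl fun p _ => Finset.sum_congr rfl fun k _ => ?_
    ring
  have hbound : (r j : ℝ) * A ≤ (r j : ℝ) * (M ^ 2 * ∑ k, S k ^ 2) := by
    rw [hrA]
    calc (∑ p : Fin (r j), ∑ q : Fin (r j), C p q * W p q)
        = ∑ p : Fin (r j), C p p * W p p := Finset.sum_congr rfl fun p _ => hdiag p
      _ ≤ ∑ p : Fin (r j), M ^ 2 * W p p :=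
          Finset.sum_le_sum fun p _ => mul_le_mul_of_nonneg_right (hCdiag p) (hWnonneg p)
      _ = M ^ 2 * ∑ p : Fin (r j), W p p := by rw [Finset.mul_sum]
      _ = (r j : ℝ) * (M ^ 2 * ∑ k, S k ^ 2) := by rw [hsumW]; ring
  have hrpos : (0 : ℝ) < (r j : ℝ) := by exact_mod_cast hjpos
  have hfinal : A ≤ M ^ 2 * ∑ k, S k ^ 2 := (mul_le_mul_iff_right₀ hrpos).mp hbound
  unfold frob
  calc Real.sqrt A ≤ Real.sqrt (M ^ 2 * ∑ k, S k ^ 2) := Real.sqrt_le_sqrt hfinal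
    _ = M * Real.sqrt (∑ k, S k ^ 2) := by
        rw [Real.sqrt_mul (by positivity), Real.sqrt_sq hM0]
end
end
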